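/- Let S ⊂ ℝ² be a domain, a ∈ ℝ, and f ∈ C²(S) satisfying ((∂f/∂x)² + y² + a²)^{−1/2} ∂²f/∂x² + 2 ∂²f/∂y² = 0 with (∂f/∂x)² + y² + a² > 0 on S. Set u = ∂f/∂y and v = ∂f/∂x. Then u, v satisfy ∂u/∂x = ∂v/∂y and ∂v/∂x = −2(v² + y² + a²)^{1/2} ∂u/∂y on S. -/

import Mathlib

open Set

/-- The quasilinear operator `P(f) = ((∂f/∂x)² + y² + a²)^{-1/2} ∂²f/∂x² + 2 ∂²f/∂y²`. -/
noncomputable def Pop (a : ℝ) (f : ℝ × ℝ → ℝ) (p : ℝ × ℝ) : ℝ :=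
  ((fderiv ℝ f p ((1 : ℝ), (0 : ℝ))) ^ 2 + p.2 ^ 2 + a ^ 2) ^ (-(1 : ℝ) / 2)
    * fderiv ℝ (fun q => fderiv ℝ f q ((1 : ℝ), (0 : ℝ))) p ((1 : ℝ), (0 : ℝ))
  + 2 * fderiv ℝ (fun q => fderiv ℝ f q ((0 : ℝ), (1 : ℝ))) p ((0 : ℝ), (1 : ℝ))

lemma fderiv_eval (f : ℝ × ℝ → ℝ) (p : ℝ × ℝ)
    (hd : DifferentiableAt ℝ (fderiv ℝ f) p) (w w' : ℝ × ℝ) :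
    fderiv ℝ (fun q => fderiv ℝ f q w) p w' = fderiv ℝ (fderiv ℝ f) p w' w := by
  have := fderiv_clm_apply (c := fderiv ℝ f) (u := fun _ => w) hd
    (differentiableAt_const w)
  rw [this]
  simp

/-- Proposition 3.2 (converse direction): if `f` is a `C²` solution of `P(f) = 0`, then
`u = ∂f/∂y` and `v = ∂f/∂x` satisfy the nonlinear Cauchy–Riemann system on `S`. -/
theorem stmt_18 (S U : Set (ℝ × ℝ)) (hS : IsCompact S) (hU : IsOpen U) (hSU : S ⊆ U)
    (a : ℝ) (f : ℝ × ℝ → ℝ) (hf : ContDiffOn ℝ 2 f U)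
    (hpos : ∀ p ∈ S, 0 < (fderiv ℝ f p ((1 : ℝ), (0 : ℝ))) ^ 2 + p.2 ^ 2 + a ^ 2)
    (heq : ∀ p ∈ S, Pop a f p = 0)
    (u v : ℝ × ℝ → ℝ)
    (hu : u = fun q => fderiv ℝ f q ((0 : ℝ), (1 : ℝ)))
    (hv : v = fun q => fderiv ℝ f q ((1 : ℝ), (0 : ℝ))) :
    ∀ p ∈ S,
      fderiv ℝ u p ((1 : ℝ), (0 : ℝ)) = fderiv ℝ v p ((0 : ℝ), (1 : ℝ)) ∧
      fderiv ℝ v p ((1 : ℝ), (0 : ℝ)) =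
        -2 * ((v p) ^ 2 + p.2 ^ 2 + a ^ 2) ^ ((1 : ℝ) / 2)
          * fderiv ℝ u p ((0 : ℝ), (1 : ℝ)) := by
  intro p hp
  have hfa : ContDiffAt ℝ 2 f p := hf.contDiffAt (hU.mem_nhds (hSU hp))
  have hd : DifferentiableAt ℝ (fderiv ℝ f) p :=
    (hfa.fderiv_right (m := 1) le_rfl).differentiableAt one_ne_zero
  have hsymm : IsSymmSndFDerivAt ℝ f p := hfa.isSymmSndFDerivAt minSmoothness_of_isRCLikeNormedField.le
  subst hu hv
  have e1 := fderiv_eval f p hd ((0 : ℝ), (1 : ℝ)) ((1 : ℝ), (0 : ℝ))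
  have e2 := fderiv_eval f p hd ((1 : ℝ), (0 : ℝ)) ((0 : ℝ), (1 : ℝ))
  constructor
  · rw [e1, e2, hsymm]
  · have hA := hpos p hp
    have hPop := heq p hp
    unfold Pop at hPop
    set A := (fderiv ℝ f p ((1 : ℝ), (0 : ℝ))) ^ 2 + p.2 ^ 2 + a ^ 2 with hAdef
    set vx := fderiv ℝ (fun q => fderiv ℝ f q ((1 : ℝ), (0 : ℝ))) p ((1 : ℝ), (0 : ℝ))
    set uy := fderiv ℝ (fun q => fderiv ℝ f q ((0 : ℝ), (1 : ℝ))) p ((0 : ℝ), (1 : ℝ))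
    have key : A ^ ((1:ℝ)/2) * (A ^ (-(1:ℝ)/2)) = 1 := by
      rw [← Real.rpow_add hA]
      norm_num
    have : A ^ ((1:ℝ)/2) * (A ^ (-(1:ℝ)/2) * vx + 2 * uy) = 0 := by
      rw [hPop]; ring
    have hvx : vx = -2 * A ^ ((1:ℝ)/2) * uy := by
      have h2 : A ^ ((1:ℝ)/2) * (A ^ (-(1:ℝ)/2)) * vx
          + A ^ ((1:ℝ)/2) * (2 * uy) = 0 := by linarith [this]
      rw [key] at h2
      linarith
    exact hvx
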